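/- Let t ∈ F \ F_{q^2} and μ, μ' ∈ F. All four components of the vector μ·(1, t^q, t, t^(q+1)) + μ'·(1, t^(q^3), t^(q^2), t^(q^2+q^3)) lie in F_{q^2} if and only if μ' = μ^(q^2). -/

import Mathlib

/-- All four components of `μ·(1, t^q, t, t^(q+1)) + μ'·(1, t^(q³), t^(q²), t^(q²+q³))`
lie in `F_{q²}` if and only if `μ' = μ^(q²)`. -/
theorem stmt_9 (h q : ℕ) (hh : 1 ≤ h) (hq : q = 2 ^ h)
    (F : Type*) [Field F] [Fintype F] (hF : Fintype.card F = q ^ 4)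
    (t : F) (ht : t ^ q ^ 2 ≠ t) (μ μ' : F) :
    ((μ * 1 + μ' * 1) ^ q ^ 2 = μ * 1 + μ' * 1 ∧
      (μ * t ^ q + μ' * t ^ q ^ 3) ^ q ^ 2 = μ * t ^ q + μ' * t ^ q ^ 3 ∧
      (μ * t + μ' * t ^ q ^ 2) ^ q ^ 2 = μ * t + μ' * t ^ q ^ 2 ∧
      (μ * t ^ (q + 1) + μ' * t ^ (q ^ 2 + q ^ 3)) ^ q ^ 2 =
        μ * t ^ (q + 1) + μ' * t ^ (q ^ 2 + q ^ 3)) ↔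
    μ' = μ ^ q ^ 2 := by
  -- characteristic 2
  haveI : Fact (Nat.Prime 2) := ⟨Nat.prime_two⟩
  haveI hchar : CharP F 2 := by
    obtain ⟨p, hp⟩ := CharP.exists F
    haveI := hp
    obtain ⟨n, hprime, hcard⟩ := @FiniteField.card F _ _ p hp
    have hdvd : p ∣ 2 ^ (h * 4) := by
      rw [pow_mul, ← hq, ← hF, hcard]
      exact dvd_pow_self p n.2.ne'
    have : p = 2 := by
      have := hprime.dvd_of_dvd_pow hdvd
      exact (Nat.prime_dvd_prime_iff_eq hprime Nat.prime_two).mp this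
    rwa [this] at hp
  subst hq
  -- basic Frobenius facts
  have hadd : ∀ x y : F, (x + y) ^ (2 ^ h) ^ 2 = x ^ (2 ^ h) ^ 2 + y ^ (2 ^ h) ^ 2 := by
    intro x y
    have e : (2 ^ h) ^ 2 = 2 ^ (h * 2) := by rw [pow_mul]
    rw [e]
    exact add_pow_char_pow ..
  have hfix : ∀ x : F, (x ^ (2 ^ h) ^ 2) ^ (2 ^ h) ^ 2 = x := by
    intro x
    rw [← pow_mul, show (2 ^ h) ^ 2 * (2 ^ h) ^ 2 = (2 ^ h) ^ 4 by ring, ← hF]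
    exact FiniteField.pow_card x
  have hmul : ∀ x y : F, (x * y) ^ (2 ^ h) ^ 2 = x ^ (2 ^ h) ^ 2 * y ^ (2 ^ h) ^ 2 :=
    fun x y => mul_pow x y _
  have h2 : ∀ x : F, x + x = 0 := fun x => CharTwo.add_self_eq_zero x
  set Q : ℕ := (2 ^ h) ^ 2 with hQdef
  constructor
  · rintro ⟨h1, -, h3, -⟩
    simp only [hadd, hmul, hfix, one_pow, mul_one] at h1 h3
    have hA : μ' ^ Q + μ = μ' + μ ^ Q := by
      linear_combination h1 + h2 μ - h2 (μ ^ Q)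
    have key : (μ' + μ ^ Q) * (t ^ Q + t) = 0 := by
      linear_combination h3 + h2 (μ' * t ^ Q) + h2 (μ * t) - t * hA
    rcases mul_eq_zero.mp key with h0 | h0
    · linear_combination h0 - h2 (μ ^ Q)
    · exact absurd (by linear_combination h0 - h2 t) ht
  · rintro rfl
    have ht3 : (t : F) ^ (2 ^ h) ^ 3 = (t ^ 2 ^ h) ^ Q := by
      rw [hQdef, ← pow_mul, ← pow_mul]; ring_nf
    have ha2 : (t : F) ^ (Q + (2 ^ h) ^ 3) = t ^ Q * (t ^ 2 ^ h) ^ Q := by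
      rw [pow_add, hQdef, ← pow_mul, ← pow_mul]; ring_nf
    have ha1 : (t : F) ^ (2 ^ h + 1) = t ^ 2 ^ h * t := by rw [pow_add, pow_one]
    refine ⟨?_, ?_, ?_, ?_⟩ <;>
      simp only [ht3, ha2, ha1, hadd, hmul, hfix, one_pow, mul_one] <;> ring
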